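/- Let π_1 denote the projection of H_R onto Prim(H_R) = Im(F_1) vanishing on ℚ·1 and on all Im(F_j), j ≥ 2, relative to the decomposition H_R = ℚ·1 ⊕ ⊕_{j≥1} Im(F_j). Then for any non-empty forest F with Δ̃(F) = Σ_{(F)} F^{(1)} ⊗ F^{(2)}, one has π_1(F) = F − Σ_{(F)} F^{(1)} ⊤ π_1(F^{(2)}). -/

import Mathlib

open scoped TensorProduct

set_option synthInstance.maxHeartbeats 400000
set_option maxHeartbeats 1000000

section

variable {H : Type*} [CommRing H] [Bialgebra ℚ H]

/-- `segAux t q n a = q (a+n) ⊤ ... ⊤ q a`, the iterated natural growth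
(left-nested) for a bilinear operation `t`. -/
def segAux (t : H →ₗ[ℚ] H →ₗ[ℚ] H) (q : ℕ → H) : ℕ → ℕ → H
  | 0, a => q a
  | n + 1, a => t (segAux t q n (a + 1)) (q a)

/-- `seg t q a b = q_b ⊤ ... ⊤ q_a` for `a ≤ b`. -/
def seg (t : H →ₗ[ℚ] H →ₗ[ℚ] H) (q : ℕ → H) (a b : ℕ) : H :=
  segAux t q (b - a) a

/-- The reduced coproduct `Δ̃(x) = Δ(x) − 1 ⊗ x − x ⊗ 1`. -/
noncomputable def rcomul (x : H) : H ⊗[ℚ] H :=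
  Coalgebra.comul x - 1 ⊗ₜ[ℚ] x - x ⊗ₜ[ℚ] 1

/-- `Im t k` is the image `Im(F_k)` of the `k`-fold iterated natural growth of
primitive elements: the span of all `p_k ⊤ ... ⊤ p_1` with the `p_m` primitive. -/
noncomputable def Im (t : H →ₗ[ℚ] H →ₗ[ℚ] H) (k : ℕ) : Submodule ℚ H :=
  Submodule.span ℚ {x : H | ∃ q : ℕ → H,
    (∀ m, 1 ≤ m → m ≤ k →
      (Coalgebra.comul (q m) : H ⊗[ℚ] H) = q m ⊗ₜ[ℚ] 1 + 1 ⊗ₜ[ℚ] q m) ∧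
    x = seg t q 1 k}

namespace Pi1Aux

/-- primitivity -/
def IsPrim (x : H) : Prop :=
  (Coalgebra.comul x : H ⊗[ℚ] H) = x ⊗ₜ[ℚ] 1 + 1 ⊗ₜ[ℚ] x

lemma segAux_congr (t : H →ₗ[ℚ] H →ₗ[ℚ] H) (q q' : ℕ → H) (n a : ℕ)
    (h : ∀ m, a ≤ m → m ≤ a + n → q m = q' m) :
    segAux t q n a = segAux t q' n a := by
  induction n generalizing a with
  | zero => simpa [segAux] using h a le_rfl (by omega)
  | succ n ih =>
    simp only [segAux]
    rw [ih (a + 1) (fun m h1 h2 => h m (by omega) (by omega)),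
      h a le_rfl (by omega)]

lemma segAux_shift (t : H →ₗ[ℚ] H →ₗ[ℚ] H) (q : ℕ → H) (b : ℕ) :
    ∀ n a, segAux t (fun m => q (m + b)) n a = segAux t q n (a + b)
  | 0, a => rfl
  | n + 1, a => by
    have h : a + 1 + b = a + b + 1 := by omega
    simp only [segAux, segAux_shift t q b n (a + 1), h]

lemma rcomul_prim (p : H) (hp : IsPrim p) : rcomul p = 0 := by
  rw [rcomul, hp]; abel

lemma rcomul_one : rcomul (1 : H) = -(1 ⊗ₜ[ℚ] (1 : H)) := by
  rw [rcomul, Bialgebra.comul_one, Algebra.TensorProduct.one_def]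
  abel

lemma rT_rcomul (x : H) :
    LinearMap.rTensor H (Coalgebra.counit (R := ℚ) (A := H)) (rcomul x)
      = (-(Coalgebra.counit (R := ℚ) x : ℚ)) ⊗ₜ[ℚ] (1 : H) := by
  simp only [rcomul, map_sub, Coalgebra.rTensor_counit_comul,
    LinearMap.rTensor_tmul, Bialgebra.counit_one, TensorProduct.neg_tmul]
  abel

lemma lT_rcomul (x : H) :
    LinearMap.lTensor H (Coalgebra.counit (R := ℚ) (A := H)) (rcomul x)
      = -((1 : H) ⊗ₜ[ℚ] (Coalgebra.counit (R := ℚ) x : ℚ)) := by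
  simp only [rcomul, map_sub, Coalgebra.lTensor_counit_comul,
    LinearMap.lTensor_tmul, Bialgebra.counit_one]
  abel

lemma counit_prim (p : H) (hp : IsPrim p) :
    Coalgebra.counit (R := ℚ) p = 0 := by
  have h := rT_rcomul (x := p)
  rw [rcomul_prim p hp, map_zero] at h
  have h2 := congrArg ((TensorProduct.lid ℚ ℚ).toLinearMap ∘ₗ
    LinearMap.lTensor ℚ (Coalgebra.counit (R := ℚ) (A := H))) h
  simpa using h2.symm


variable (t : H →ₗ[ℚ] H →ₗ[ℚ] H)

lemma counit_t
    (hgrowth : ∀ x y : H, IsPrim y →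
      rcomul (t x y) = x ⊗ₜ[ℚ] y + LinearMap.lTensor H (t.flip y) (rcomul x))
    (x p : H) (hp : IsPrim p) :
    Coalgebra.counit (R := ℚ) (t x p)
      = Coalgebra.counit (R := ℚ) x * Coalgebra.counit (R := ℚ) (t 1 p) := by
  have h := hgrowth x p hp
  have key := congrArg ((TensorProduct.lid ℚ ℚ).toLinearMap ∘ₗ
      LinearMap.lTensor ℚ (Coalgebra.counit (R := ℚ) (A := H)) ∘ₗ
      LinearMap.rTensor H (Coalgebra.counit (R := ℚ) (A := H))) h
  have comm : LinearMap.rTensor H (Coalgebra.counit (R := ℚ) (A := H))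
        ((LinearMap.lTensor H (t.flip p)) (rcomul x))
      = LinearMap.lTensor ℚ (t.flip p)
        (LinearMap.rTensor H (Coalgebra.counit (R := ℚ) (A := H)) (rcomul x)) := by
    rw [← LinearMap.comp_apply, ← LinearMap.comp_apply,
      LinearMap.rTensor_comp_lTensor, LinearMap.lTensor_comp_rTensor]
  simp only [LinearMap.comp_apply, map_add, rT_rcomul, comm,
    LinearMap.rTensor_tmul, LinearMap.lTensor_tmul, counit_prim p hp,
    TensorProduct.tmul_zero, map_zero, LinearMap.flip_apply,
    LinearEquiv.coe_coe, TensorProduct.lid_tmul, Bialgebra.counit_one,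
    TensorProduct.neg_tmul, map_neg, smul_eq_mul, zero_add, one_mul] at key
  linarith [key]

lemma t_one_prim
    (hgrowth : ∀ x y : H, IsPrim y →
      rcomul (t x y) = x ⊗ₜ[ℚ] y + LinearMap.lTensor H (t.flip y) (rcomul x))
    (p : H) (hp : IsPrim p) :
    t 1 p = p + (Coalgebra.counit (R := ℚ) (t 1 p)) • (1 : H) := by
  have h := hgrowth 1 p hp
  rw [rcomul_one, map_neg, LinearMap.lTensor_tmul, rcomul] at h
  have hflip : (t.flip p) 1 = t 1 p := rfl
  rw [hflip] at h
  have hc : (Coalgebra.comul (t 1 p) : H ⊗[ℚ] H)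
      = (t 1 p) ⊗ₜ[ℚ] (1 : H) + (1 : H) ⊗ₜ[ℚ] p := by
    linear_combination h
  have key := congrArg ((TensorProduct.lid ℚ H).toLinearMap ∘ₗ
      LinearMap.rTensor H (Coalgebra.counit (R := ℚ) (A := H))) hc
  simp only [LinearMap.comp_apply, Coalgebra.rTensor_counit_comul, map_add,
    LinearMap.rTensor_tmul, Bialgebra.counit_one, LinearEquiv.coe_coe,
    TensorProduct.lid_tmul, one_smul] at key
  exact key.trans (add_comm _ _)

lemma counit_segAux
    (hgrowth : ∀ x y : H, IsPrim y →
      rcomul (t x y) = x ⊗ₜ[ℚ] y + LinearMap.lTensor H (t.flip y) (rcomul x))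
    (q : ℕ → H) (n a : ℕ)
    (hq : ∀ m, a ≤ m → m ≤ a + n → IsPrim (q m)) :
    Coalgebra.counit (R := ℚ) (segAux t q n a) = 0 := by
  induction n generalizing a with
  | zero => exact counit_prim _ (hq a le_rfl (by omega))
  | succ n ih =>
    rw [show segAux t q (n + 1) a = t (segAux t q n (a + 1)) (q a) from rfl,
      counit_t t hgrowth _ _ (hq a le_rfl (by omega)),
      ih (a + 1) (fun m h1 h2 => hq m (by omega) (by omega)), zero_mul]

lemma t_gen_mem (p : H) (hp : IsPrim p) (k : ℕ) (hk : 1 ≤ k) (q : ℕ → H)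
    (hq : ∀ m, 1 ≤ m → m ≤ k → IsPrim (q m)) :
    t (seg t q 1 k) p ∈ Im t (k + 1) := by
  obtain ⟨j, rfl⟩ : ∃ j, k = j + 1 := ⟨k - 1, by omega⟩
  apply Submodule.subset_span
  refine ⟨fun n => if n = 1 then p else q (n - 1), ?_, ?_⟩
  · intro m h1 h2
    by_cases hm : m = 1
    · simpa [hm, IsPrim] using hp
    · simpa [hm, IsPrim] using hq (m - 1) (by omega) (by omega)
  · show t (seg t q 1 (j + 1)) p
      = seg t (fun n => if n = 1 then p else q (n - 1)) 1 (j + 2)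
    rw [seg, seg]
    simp only [Nat.add_sub_cancel, show j + 2 - 1 = j + 1 from rfl]
    rw [show segAux t (fun n => if n = 1 then p else q (n - 1)) (j + 1) 1
        = t (segAux t (fun n => if n = 1 then p else q (n - 1)) j (1 + 1))
            (if (1 : ℕ) = 1 then p else q 0) from rfl, if_pos rfl]
    have hseg : segAux t (fun n => if n = 1 then p else q (n - 1)) j (1 + 1)
        = segAux t q j 1 :=
      calc segAux t (fun n => if n = 1 then p else q (n - 1)) j (1 + 1)
          = segAux t (fun m => if m + 1 = 1 then p else q (m + 1 - 1)) j 1 :=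
            (segAux_shift t _ 1 j 1).symm
        _ = segAux t q j 1 := by
            apply segAux_congr
            intro m h1 h2
            simp [Nat.succ_ne_zero, show ¬ (m + 1 = 1) by omega, show m ≠ 0 by omega]
    rw [hseg]


lemma pi_t
    (hgrowth : ∀ x y : H, IsPrim y →
      rcomul (t x y) = x ⊗ₜ[ℚ] y + LinearMap.lTensor H (t.flip y) (rcomul x))
    (hcover : ∀ x : H,
      x ∈ Submodule.span ℚ {(1 : H)} ⊔ ⨆ k, ⨆ _ : 1 ≤ k, Im t k)
    (π : H →ₗ[ℚ] H)
    (hπprim : ∀ x : H, IsPrim x → π x = x)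
    (hπone : π 1 = 0)
    (hπhigher : ∀ k, 2 ≤ k → ∀ x ∈ Im t k, π x = 0)
    (p : H) (hp : IsPrim p) (z : H) :
    π (t z p) = (Coalgebra.counit (R := ℚ) z) • p := by
  have hle : Submodule.span ℚ {(1 : H)} ⊔ (⨆ k, ⨆ _ : 1 ≤ k, Im t k)
      ≤ LinearMap.eqLocus (π ∘ₗ t.flip p)
          ((Coalgebra.counit (R := ℚ) (A := H)).smulRight p) := by
    refine sup_le ?_ ?_
    · rw [Submodule.span_le]
      intro w hw
      rw [Set.mem_singleton_iff] at hw
      subst hw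
      rw [SetLike.mem_coe, LinearMap.mem_eqLocus]
      simp only [LinearMap.comp_apply, LinearMap.flip_apply,
        LinearMap.smulRight_apply, Bialgebra.counit_one, one_smul]
      rw [t_one_prim t hgrowth p hp, map_add, map_smul, hπone,
        hπprim p hp, smul_zero, add_zero]
    · refine iSup_le fun k => iSup_le fun hk => ?_
      rw [Im, Submodule.span_le]
      rintro w ⟨q, hq, rfl⟩
      rw [SetLike.mem_coe, LinearMap.mem_eqLocus]
      simp only [LinearMap.comp_apply, LinearMap.flip_apply,
        LinearMap.smulRight_apply]
      have hq' : ∀ m, 1 ≤ m → m ≤ k → IsPrim (q m) := hq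
      rw [hπhigher (k + 1) (by omega) _ (t_gen_mem t p hp k hk q hq')]
      rw [seg, counit_segAux t hgrowth q (k - 1) 1
        (fun m h1 h2 => hq' m h1 (by omega)), zero_smul]
  have hz := hle (hcover z)
  rw [LinearMap.mem_eqLocus] at hz
  simpa only [LinearMap.comp_apply, LinearMap.flip_apply,
    LinearMap.smulRight_apply] using hz

lemma main_gen
    (hgrowth : ∀ x y : H, IsPrim y →
      rcomul (t x y) = x ⊗ₜ[ℚ] y + LinearMap.lTensor H (t.flip y) (rcomul x))
    (hcover : ∀ x : H,
      x ∈ Submodule.span ℚ {(1 : H)} ⊔ ⨆ k, ⨆ _ : 1 ≤ k, Im t k)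
    (π : H →ₗ[ℚ] H)
    (hπprim : ∀ x : H, IsPrim x → π x = x)
    (hπone : π 1 = 0)
    (hπhigher : ∀ k, 2 ≤ k → ∀ x ∈ Im t k, π x = 0)
    (q : ℕ → H) (n a : ℕ)
    (hq : ∀ m, a ≤ m → m ≤ a + n → IsPrim (q m)) :
    π (segAux t q n a) = segAux t q n a
      - TensorProduct.lift t ((LinearMap.lTensor H π) (rcomul (segAux t q n a))) := by
  cases n with
  | zero =>
    have hp := hq a le_rfl (by omega)
    rw [show segAux t q 0 a = q a from rfl, rcomul_prim _ hp, map_zero,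
      map_zero, sub_zero]
    exact hπprim _ hp
  | succ n =>
    set x := segAux t q n (a + 1) with hxdef
    have hp : IsPrim (q a) := hq a le_rfl (by omega)
    have hqx : ∀ m, a + 1 ≤ m → m ≤ a + 1 + n → IsPrim (q m) :=
      fun m h1 h2 => hq m (by omega) (by omega)
    have hxc : Coalgebra.counit (R := ℚ) x = 0 :=
      counit_segAux t hgrowth q n (a + 1) hqx
    have hseg : seg t (fun m => q (m + a)) 1 (n + 1) = x := by
      rw [seg, Nat.add_sub_cancel, segAux_shift t q a n 1, Nat.add_comm 1 a]
    have hmem : segAux t q (n + 1) a ∈ Im t (n + 1 + 1) := by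
      rw [show segAux t q (n + 1) a = t x (q a) from rfl, ← hseg]
      exact t_gen_mem t (q a) hp (n + 1) (by omega) _
        (fun m h1 h2 => hqx (m + a) (by omega) (by omega))
    have hπy : π (segAux t q (n + 1) a) = 0 := hπhigher (n + 2) (by omega) _ hmem
    have hr : rcomul (segAux t q (n + 1) a)
        = x ⊗ₜ[ℚ] q a + LinearMap.lTensor H (t.flip (q a)) (rcomul x) :=
      hgrowth x (q a) hp
    rw [hπy, hr, map_add, map_add]
    have h1 : TensorProduct.lift t ((LinearMap.lTensor H π) (x ⊗ₜ[ℚ] q a))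
        = t x (q a) := by
      rw [LinearMap.lTensor_tmul, hπprim _ hp, TensorProduct.lift.tmul]
    have h2 : (LinearMap.lTensor H π)
        ((LinearMap.lTensor H (t.flip (q a))) (rcomul x)) = 0 := by
      rw [← LinearMap.comp_apply, ← LinearMap.lTensor_comp]
      have hcomp : π ∘ₗ t.flip (q a)
          = (LinearMap.toSpanSingleton ℚ H (q a)) ∘ₗ
            (Coalgebra.counit (R := ℚ) (A := H)) := by
        ext z
        simp only [LinearMap.comp_apply, LinearMap.flip_apply,
          LinearMap.toSpanSingleton_apply]
        exact pi_t t hgrowth hcover π hπprim hπone hπhigher (q a) hp z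
      rw [hcomp, LinearMap.lTensor_comp, LinearMap.comp_apply, lT_rcomul, hxc]
      simp
    rw [h1, h2, map_zero, add_zero,
      show segAux t q (n + 1) a = t x (q a) from rfl, sub_self]

noncomputable def Rc : H →ₗ[ℚ] H ⊗[ℚ] H :=
  Coalgebra.comul - (TensorProduct.mk ℚ H H) 1 - (TensorProduct.mk ℚ H H).flip 1

lemma Rc_apply (x : H) : Rc x = rcomul x := rfl

noncomputable def LL (t : H →ₗ[ℚ] H →ₗ[ℚ] H) (π : H →ₗ[ℚ] H) : H →ₗ[ℚ] H :=
  π - LinearMap.id + (TensorProduct.lift t ∘ₗ LinearMap.lTensor H π ∘ₗ Rc)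

lemma LL_apply (π : H →ₗ[ℚ] H) (x : H) :
    LL t π x = π x - x + TensorProduct.lift t (LinearMap.lTensor H π (rcomul x)) := rfl

end Pi1Aux

/-- Let `π₁` be the projection of `H_R` onto `Prim(H_R) = Im(F_1)` vanishing on `ℚ·1`
and on all `Im(F_j)`, `j ≥ 2`, relative to the decomposition
`H_R = ℚ·1 ⊕ ⊕_{j≥1} Im(F_j)`.  Then for any non-empty forest `F` (equivalently, by
linearity, any `x` in the augmentation ideal) one has
`π₁(F) = F − Σ_{(F)} F⁽¹⁾ ⊤ π₁(F⁽²⁾)`, the sum being over the reduced coproduct. -/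
theorem pi_one_recursion
    (t : H →ₗ[ℚ] H →ₗ[ℚ] H)
    -- the natural growth property for `y` primitive
    (hgrowth : ∀ x y : H,
      (Coalgebra.comul y : H ⊗[ℚ] H) = y ⊗ₜ[ℚ] 1 + 1 ⊗ₜ[ℚ] y →
      rcomul (t x y) = x ⊗ₜ[ℚ] y + LinearMap.lTensor H (t.flip y) (rcomul x))
    -- the decomposition `H = ℚ·1 ⊕ ⊕_{j ≥ 1} Im(F_j)` (covering part)
    (hcover : ∀ x : H,
      x ∈ Submodule.span ℚ {(1 : H)} ⊔ ⨆ k, ⨆ _ : 1 ≤ k, Im t k)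
    -- `π` is the projection onto `Im(F_1) = Prim(H_R)` along this decomposition
    (π : H →ₗ[ℚ] H)
    (hπprim : ∀ x : H,
      (Coalgebra.comul x : H ⊗[ℚ] H) = x ⊗ₜ[ℚ] 1 + 1 ⊗ₜ[ℚ] x → π x = x)
    (hπone : π 1 = 0)
    (hπhigher : ∀ k, 2 ≤ k → ∀ x ∈ Im t k, π x = 0) :
    ∀ x : H, Coalgebra.counit (R := ℚ) x = 0 →
      π x = x - TensorProduct.lift t ((LinearMap.lTensor H π) (rcomul x)) := by
  intro x hx
  have hgrowth' : ∀ x y : H, Pi1Aux.IsPrim y →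
      rcomul (t x y) = x ⊗ₜ[ℚ] y + LinearMap.lTensor H (t.flip y) (rcomul x) :=
    fun x y hy => hgrowth x y hy
  have hπprim' : ∀ x : H, Pi1Aux.IsPrim x → π x = x := fun x hx => hπprim x hx
  have hker : (⨆ k, ⨆ _ : 1 ≤ k, Im t k)
      ≤ LinearMap.ker (Coalgebra.counit (R := ℚ) (A := H)) := by
    refine iSup_le fun k => iSup_le fun hk => ?_
    rw [Im, Submodule.span_le]
    rintro w ⟨q, hq, rfl⟩
    rw [SetLike.mem_coe, LinearMap.mem_ker, seg]
    exact Pi1Aux.counit_segAux t hgrowth' q (k - 1) 1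
      (fun m h1 h2 => hq m h1 (by omega))
  have hLker : (⨆ k, ⨆ _ : 1 ≤ k, Im t k) ≤ LinearMap.ker (Pi1Aux.LL t π) := by
    refine iSup_le fun k => iSup_le fun hk => ?_
    rw [Im, Submodule.span_le]
    rintro w ⟨q, hq, rfl⟩
    rw [SetLike.mem_coe, LinearMap.mem_ker, Pi1Aux.LL_apply, seg]
    rw [Pi1Aux.main_gen t hgrowth' hcover π hπprim' hπone hπhigher q (k - 1) 1
      (fun m h1 h2 => hq m h1 (by omega))]
    abel
  obtain ⟨u, hu, v, hv, huv⟩ := Submodule.mem_sup.1 (hcover x)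
  obtain ⟨c, rfl⟩ := Submodule.mem_span_singleton.1 hu
  have hcv : Coalgebra.counit (R := ℚ) v = 0 := hker hv
  have hc0 : c = 0 := by
    have h := hx
    rw [← huv, map_add, map_smul, Bialgebra.counit_one, hcv] at h
    simpa using h
  rw [hc0, zero_smul, zero_add] at huv
  have hLx : Pi1Aux.LL t π x = 0 := by
    rw [← huv]
    exact hLker hv
  rw [Pi1Aux.LL_apply] at hLx
  linear_combination hLx

end
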